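/- Fix an integer n ≥ 2 and p ∈ (0,1). In the reduced buyer-optimal problem — maximize B(θ₀,k,θ) = n(1−k)(1−θ)(A(θ) − A(θ₀)) over triples (θ₀,k,θ) with 0 ≤ θ₀ ≤ θ < 1 and 0 ≤ k ≤ 1 subject to (1−k)(1−θ)(1 − log(1−θ) + log(1−θ₀)) + k(1−θ₀) = p — a maximizer exists, and every maximizer (θ₀,k,θ) satisfies k·θ₀ = 0; that is, at an optimum it is impossible that both the low virtual value k and the mass θ₀ on signal 0 are strictly positive. -/

import Mathlib

/-- `A(t) = −∑_{i=1}^{n−1} tⁱ/i − log(1−t)`. -/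
noncomputable def A (n : ℕ) (t : ℝ) : ℝ :=
  -(∑ i ∈ Finset.Icc 1 (n - 1), t ^ i / (i : ℝ)) - Real.log (1 - t)

/-- Buyers' total surplus in the reduced buyer-optimal problem:
`B(θ₀,k,θ) = n(1−k)(1−θ)(A(θ) − A(θ₀))`. -/
noncomputable def B (n : ℕ) (θ₀ k θ : ℝ) : ℝ :=
  n * (1 - k) * (1 - θ) * (A n θ - A n θ₀)

/-- Feasibility for the reduced buyer-optimal problem:
`0 ≤ θ₀ ≤ θ < 1`, `0 ≤ k ≤ 1`, and the mean constraint. -/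
def Feasible (n : ℕ) (p θ₀ k θ : ℝ) : Prop :=
  0 ≤ θ₀ ∧ θ₀ ≤ θ ∧ θ < 1 ∧ 0 ≤ k ∧ k ≤ 1 ∧
    (1 - k) * (1 - θ) * (1 - Real.log (1 - θ) + Real.log (1 - θ₀)) +
      k * (1 - θ₀) = p


open Real Set

lemma hasDerivAt_A (n : ℕ) {t : ℝ} (ht : t ≠ 1) :
    HasDerivAt (A n) (t ^ (n - 1) / (1 - t)) t := by
  have h1t : (1 : ℝ) - t ≠ 0 := sub_ne_zero.mpr (Ne.symm ht)
  have hsum : HasDerivAt (fun s : ℝ => ∑ i ∈ Finset.Icc 1 (n - 1), s ^ i / (i : ℝ))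
      (∑ i ∈ Finset.Icc 1 (n - 1), t ^ (i - 1)) t := by
    apply HasDerivAt.fun_sum
    intro i hi
    have hi1 : 1 ≤ i := (Finset.mem_Icc.mp hi).1
    have hi0 : (i : ℝ) ≠ 0 := Nat.cast_ne_zero.mpr (by omega)
    have h := (hasDerivAt_pow i t).div_const (i : ℝ)
    have : (i : ℝ) * t ^ (i - 1) / (i : ℝ) = t ^ (i - 1) := by field_simp
    rwa [this] at h
  have hin : HasDerivAt (fun s : ℝ => (1 : ℝ) - s) (-1) t := (hasDerivAt_id t).const_sub 1
  have hlog : HasDerivAt (fun s : ℝ => Real.log (1 - s)) ((1 - t)⁻¹ * (-1)) t :=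
    (Real.hasDerivAt_log h1t).comp t hin
  have h := (hsum.neg).sub hlog
  have key : -(∑ i ∈ Finset.Icc 1 (n - 1), t ^ (i - 1)) - (1 - t)⁻¹ * (-1)
      = t ^ (n - 1) / (1 - t) := by
    have h1 : Finset.Icc 1 (n - 1) = Finset.Ico 1 n := by
      rcases Nat.eq_zero_or_pos n with h | h
      · subst h; rfl
      · rw [← Finset.Ico_add_one_right_eq_Icc, Nat.sub_add_cancel (show 1 ≤ n from h)]
    have h2 : ∑ i ∈ Finset.Icc 1 (n - 1), t ^ (i - 1) = ∑ i ∈ Finset.range (n - 1), t ^ i := by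
      rw [h1, Finset.sum_Ico_eq_sum_range]
      simp
    rw [h2, geom_sum_eq ht]
    have ht' : t - 1 ≠ 0 := sub_ne_zero.mpr ht
    field_simp
    ring
  rw [← key]
  exact h

lemma A_zero (n : ℕ) : A n 0 = 0 := by
  have h : ∀ i ∈ Finset.Icc 1 (n - 1), (0:ℝ) ^ i / (i : ℝ) = 0 := by
    intro i hi
    have hi1 : i ≠ 0 := by have := (Finset.mem_Icc.mp hi).1; omega
    simp [zero_pow hi1]
  rw [A, Finset.sum_eq_zero h]
  simp

lemma A_strictMonoOn (n : ℕ) : StrictMonoOn (A n) (Set.Ico (0:ℝ) 1) := by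
  apply strictMonoOn_of_deriv_pos (convex_Ico 0 1)
  · intro t ht
    exact (hasDerivAt_A n (ne_of_lt ht.2)).continuousAt.continuousWithinAt
  · intro t ht
    rw [interior_Ico] at ht
    rw [(hasDerivAt_A n (ne_of_lt ht.2)).deriv]
    obtain ⟨ht0, ht1⟩ := ht
    have h1 : (0:ℝ) < 1 - t := by linarith
    positivity

lemma A_nonneg (n : ℕ) {t : ℝ} (h0 : 0 ≤ t) (h1 : t < 1) : 0 ≤ A n t := by
  rcases eq_or_lt_of_le h0 with h | h
  · rw [← h, A_zero]
  · rw [← A_zero n]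
    exact le_of_lt (A_strictMonoOn n ⟨le_refl 0, one_pos⟩ ⟨h0, h1⟩ h)

lemma A_le (n : ℕ) {t : ℝ} (h0 : 0 ≤ t) : A n t ≤ -Real.log (1 - t) := by
  have : (0:ℝ) ≤ ∑ i ∈ Finset.Icc 1 (n - 1), t ^ i / (i : ℝ) :=
    Finset.sum_nonneg fun i _ => by positivity
  simp only [A]
  linarith

lemma neg_log_le {y : ℝ} (hy : 0 < y) : -Real.log y ≤ 2 / Real.sqrt y := by
  have hs : 0 < Real.sqrt y := Real.sqrt_pos.mpr hy
  have h1 : Real.log (Real.sqrt y)⁻¹ ≤ (Real.sqrt y)⁻¹ - 1 :=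
    Real.log_le_sub_one_of_pos (by positivity)
  have h2 : Real.log (Real.sqrt y) = Real.log y / 2 := Real.log_sqrt hy.le
  rw [Real.log_inv, h2, inv_eq_one_div] at h1
  have e : 2 * (1 / Real.sqrt y) = 2 / Real.sqrt y := by ring
  linarith

lemma key_log_lt {x y : ℝ} (hy : 0 < y) (hxy : y < x) :
    y * (1 - Real.log y + Real.log x) < x := by
  have hx : 0 < x := hy.trans hxy
  have h1 : Real.log (x / y) < x / y - 1 :=
    Real.log_lt_sub_one_of_pos (by positivity) (by
      intro h
      have := (div_eq_one_iff_eq hy.ne').mp h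
      linarith)
  rw [Real.log_div hx.ne' hy.ne'] at h1
  have : y * (x / y) = x := by field_simp
  nlinarith

lemma log_add_le {x ε : ℝ} (hx : 0 < x) (hε : 0 ≤ ε) :
    Real.log (x + ε) ≤ Real.log x + ε / x := by
  have h1 : Real.log ((x + ε) / x) ≤ (x + ε) / x - 1 :=
    Real.log_le_sub_one_of_pos (by positivity)
  rw [Real.log_div (by positivity) hx.ne'] at h1
  have h2 : (x + ε) / x - 1 = ε / x := by field_simp; ring
  linarith [h1, h2.le]

/-- Pure-arithmetic core of the exchange argument. -/
lemma exchange {p y x k : ℝ} (hy : 0 < y) (hyx : y < x) (hx1 : x < 1)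
    (hk : 0 < k) (h1k : 0 < 1 - k)
    (hcon : (1 - k) * y * (1 - Real.log y + Real.log x) + k * x = p) :
    ∃ ε k' : ℝ, 0 < ε ∧ ε ≤ (1 - x) / 2 ∧ 0 < k' ∧ k' < k ∧
      (1 - k') * y * (1 - Real.log y + Real.log (x + ε)) + k' * (x + ε) = p := by
  have hx0 : 0 < x := hy.trans hyx
  have hyLx : y * (1 - Real.log y + Real.log x) < x := key_log_lt hy hyx
  have hyLp : y * (1 - Real.log y + Real.log x) < p := by
    nlinarith [mul_pos hk (sub_pos.mpr hyLx)]
  have hpyL : 0 < p - y * (1 - Real.log y + Real.log x) := by linarith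
  refine ⟨min ((1 - x) / 2) (x * (p - y * (1 - Real.log y + Real.log x)) / (2 * y)), ?_⟩
  set ε : ℝ := min ((1 - x) / 2) (x * (p - y * (1 - Real.log y + Real.log x)) / (2 * y))
    with hεdef
  have hε : 0 < ε := lt_min (by linarith) (by positivity)
  have hεa2 : ε ≤ (1 - x) / 2 := min_le_left _ _
  have hεb : ε ≤ x * (p - y * (1 - Real.log y + Real.log x)) / (2 * y) := min_le_right _ _
  clear_value ε
  clear hεdef
  have hx'x : x < x + ε := by linarith
  have hL'L : Real.log x < Real.log (x + ε) := Real.log_lt_log hx0 hx'x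
  have hyL'p : y * (1 - Real.log y + Real.log (x + ε)) < p := by
    have h1 : Real.log (x + ε) ≤ Real.log x + ε / x := log_add_le hx0 hε.le
    have h2 : y * (1 - Real.log y + Real.log (x + ε)) ≤
        y * (1 - Real.log y + Real.log x) + y * (ε / x) := by nlinarith
    have h3 : y * (ε / x) ≤ (p - y * (1 - Real.log y + Real.log x)) / 2 := by
      have h4 : ε / x ≤ (p - y * (1 - Real.log y + Real.log x)) / (2 * y) := by
        rw [div_le_div_iff₀ hx0 (by positivity)]
        calc ε * (2 * y)
            ≤ (x * (p - y * (1 - Real.log y + Real.log x)) / (2 * y)) * (2 * y) := by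
              apply mul_le_mul_of_nonneg_right hεb (by positivity)
          _ = (p - y * (1 - Real.log y + Real.log x)) * x := by field_simp
      calc y * (ε / x) ≤ y * ((p - y * (1 - Real.log y + Real.log x)) / (2 * y)) :=
            mul_le_mul_of_nonneg_left h4 hy.le
        _ = (p - y * (1 - Real.log y + Real.log x)) / 2 := by field_simp
    linarith
  have hyL'x' : y * (1 - Real.log y + Real.log (x + ε)) < x + ε :=
    key_log_lt hy (by linarith)
  have hD : 0 < (x + ε) - y * (1 - Real.log y + Real.log (x + ε)) := by linarith
  refine ⟨(p - y * (1 - Real.log y + Real.log (x + ε))) /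
      ((x + ε) - y * (1 - Real.log y + Real.log (x + ε))), hε, hεa2, ?_, ?_, ?_⟩
  · exact div_pos (by linarith) hD
  · set L' : ℝ := 1 - Real.log y + Real.log (x + ε) with hL'def
    have hck : p < (1 - k) * y * L' + k * (x + ε) := by
      have hL : L' > 1 - Real.log y + Real.log x := by rw [hL'def]; linarith
      nlinarith [mul_pos (mul_pos h1k hy) (sub_pos.mpr hL), mul_pos hk hε]
    rw [div_lt_iff₀ hD]
    nlinarith [hck]
  · set L' : ℝ := 1 - Real.log y + Real.log (x + ε) with hL'def
    set k' : ℝ := (p - y * L') / ((x + ε) - y * L') with hk'def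
    have he1 : k' * ((x + ε) - y * L') = p - y * L' := div_mul_cancel₀ _ hD.ne'
    linarith [he1]

/-- The exchange argument: a feasible point with positive surplus and `k > 0`, `θ₀ > 0`
can be strictly improved. -/
lemma improve (n : ℕ) (hn : 2 ≤ n) {p a k t : ℝ} (hf : Feasible n p a k t)
    (hB : 0 < B n a k t) (hk : 0 < k) (ha : 0 < a) :
    ∃ a' k' : ℝ, Feasible n p a' k' t ∧ B n a k t < B n a' k' t := by
  obtain ⟨ha0, hat, ht1, hk0, hk1, hcon0⟩ := hf
  have hnpos : (0:ℝ) < n := by positivity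
  have hy : 0 < 1 - t := by linarith
  have h1k : 0 < 1 - k := by
    rcases lt_or_ge k 1 with h | h
    · linarith
    · exfalso
      have hk1' : k = 1 := le_antisymm hk1 h
      rw [hk1'] at hB; simp [B] at hB
  have hAD : 0 < A n t - A n a := by
    by_contra h
    push_neg at h
    have : B n a k t ≤ 0 := by
      simp only [B]
      have h1 : 0 ≤ (n:ℝ) * (1 - k) * (1 - t) := by positivity
      nlinarith
    linarith
  have halt : a < t := by
    rcases eq_or_lt_of_le hat with h | h
    · exfalso; rw [h] at hAD; linarith
    · exact h
  obtain ⟨ε, k', hε, hεa2, hk'0, hk'k, hcon'⟩ :=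
    exchange (p := p) (y := 1 - t) (x := 1 - a) hy (by linarith) (by linarith) hk h1k hcon0
  have hεa : ε ≤ a / 2 := by linarith
  refine ⟨a - ε, k', ⟨by linarith, by linarith, ht1, hk'0.le, hk'k.le.trans hk1, ?_⟩, ?_⟩
  · have hxe : 1 - (a - ε) = (1 - a) + ε := by ring
    rw [hxe]
    exact hcon'
  · have haε1 : a - ε < 1 := by linarith
    have hA' : A n (a - ε) < A n a :=
      A_strictMonoOn n ⟨by linarith, haε1⟩ ⟨ha0, by linarith⟩ (by linarith)
    simp only [B]
    have hstep1 : (n:ℝ) * (1 - k) * (1 - t) * (A n t - A n a)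
        < (n:ℝ) * (1 - k') * (1 - t) * (A n t - A n a) := by
      nlinarith [mul_pos (mul_pos (mul_pos hnpos hy) hAD) (sub_pos.mpr hk'k)]
    have hstep2 : (n:ℝ) * (1 - k') * (1 - t) * (A n t - A n a)
        ≤ (n:ℝ) * (1 - k') * (1 - t) * (A n t - A n (a - ε)) := by
      have h1 : 0 ≤ (n:ℝ) * (1 - k') * (1 - t) := by
        have hk'1 : k' ≤ 1 := (lt_of_lt_of_le hk'k hk1).le
        exact mul_nonneg (mul_nonneg hnpos.le (by linarith)) hy.le
      nlinarith [mul_nonneg h1 (sub_nonneg.mpr hA'.le)]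
    linarith

/-- There is a feasible point of the form `(0,0,t)` with positive surplus. -/
lemma exists_good (n : ℕ) (hn : 2 ≤ n) {p : ℝ} (hp : p ∈ Set.Ioo (0:ℝ) 1) :
    ∃ t : ℝ, 0 < t ∧ t < 1 ∧ Feasible n p 0 0 t ∧ 0 < B n 0 0 t := by
  obtain ⟨hp0, hp1⟩ := hp
  have hy₁0 : 0 < (p / 4) ^ 2 := by positivity
  have hy₁1 : (p / 4) ^ 2 < 1 := by nlinarith
  have ht₁0 : 0 < 1 - (p / 4) ^ 2 := by linarith
  set f : ℝ → ℝ := fun t => (1 - t) * (1 - Real.log (1 - t)) with hfdef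
  have hf0 : f 0 = 1 := by simp [hfdef]
  have hft₁ : f (1 - (p / 4) ^ 2) < p := by
    have hs : Real.sqrt ((p / 4) ^ 2) = p / 4 := Real.sqrt_sq (by positivity)
    have h1 : -Real.log ((p / 4) ^ 2) ≤ 2 / Real.sqrt ((p / 4) ^ 2) := neg_log_le hy₁0
    rw [hs] at h1
    have h3 : f (1 - (p / 4) ^ 2) = (p / 4) ^ 2 * (1 - Real.log ((p / 4) ^ 2)) := by
      simp only [hfdef]; ring_nf
    rw [h3]
    have h4 : (p / 4) ^ 2 * (1 - Real.log ((p / 4) ^ 2)) ≤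
        (p / 4) ^ 2 + (p / 4) ^ 2 * (2 / (p / 4)) := by nlinarith
    have h5 : (p / 4) ^ 2 * (2 / (p / 4)) = p / 2 := by field_simp; ring
    nlinarith
  have hcont : ContinuousOn f (Set.Icc 0 (1 - (p / 4) ^ 2)) := by
    apply ContinuousOn.mul (continuousOn_const.sub continuousOn_id)
    apply ContinuousOn.sub continuousOn_const
    apply ContinuousOn.log (continuousOn_const.sub continuousOn_id)
    intro t ht
    simp only [Set.mem_Icc] at ht
    simp only [Pi.sub_apply, id_eq]
    intro h
    nlinarith [ht.2]
  have hIVT := intermediate_value_Icc' (le_of_lt ht₁0) hcont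
  have hpmem : p ∈ Set.Icc (f (1 - (p / 4) ^ 2)) (f 0) := ⟨hft₁.le, by rw [hf0]; exact hp1.le⟩
  obtain ⟨t, htmem, htp⟩ := hIVT hpmem
  obtain ⟨ht0, ht1⟩ := htmem
  have htpos : 0 < t := by
    rcases eq_or_lt_of_le ht0 with h | h
    · exfalso; rw [← h] at htp; rw [hf0] at htp; linarith
    · exact h
  have htlt1 : t < 1 := by linarith
  refine ⟨t, htpos, htlt1, ?_, ?_⟩
  · refine ⟨le_refl 0, htpos.le, htlt1, le_refl 0, zero_le_one, ?_⟩
    have hft : f t = p := htp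
    simp only [hfdef] at hft
    simp only [sub_zero, Real.log_one, mul_one]
    linarith
  · have hA : 0 < A n t := by
      rw [← A_zero n]
      exact A_strictMonoOn n ⟨le_refl 0, one_pos⟩ ⟨htpos.le, htlt1⟩ htpos
    have hn0 : (0:ℝ) < n := by positivity
    have h1t : 0 < 1 - t := by linarith
    simp only [B, A_zero]
    nlinarith [mul_pos (mul_pos hn0 h1t) hA]

/-- Bound on the surplus of any feasible point. -/
lemma B_bound (n : ℕ) {p a k t : ℝ} (h : Feasible n p a k t) :
    B n a k t ≤ 2 * n * Real.sqrt (1 - t) := by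
  obtain ⟨ha0, hat, ht1, hk0, hk1, _⟩ := h
  have hy : 0 < 1 - t := by linarith
  have ha1 : a < 1 := lt_of_le_of_lt hat ht1
  have hAa : 0 ≤ A n a := A_nonneg n ha0 ha1
  have hAt : A n t ≤ 2 / Real.sqrt (1 - t) :=
    le_trans (A_le n (ha0.trans hat)) (neg_log_le hy)
  have hAta : A n t - A n a ≤ 2 / Real.sqrt (1 - t) := by linarith
  have hAta0 : 0 ≤ A n t - A n a := by
    have := (A_strictMonoOn n).monotoneOn ⟨ha0, ha1⟩ ⟨ha0.trans hat, ht1⟩ hat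
    linarith
  have hn0 : (0:ℝ) ≤ n := by positivity
  have h1k : 0 ≤ 1 - k := by linarith
  have hstep : B n a k t ≤ (n:ℝ) * 1 * (1 - t) * (2 / Real.sqrt (1 - t)) := by
    simp only [B]
    gcongr
    linarith
  have heq : (n:ℝ) * 1 * (1 - t) * (2 / Real.sqrt (1 - t)) = 2 * n * Real.sqrt (1 - t) := by
    rw [mul_one, mul_assoc,
      show (1 - t) * (2 / Real.sqrt (1 - t)) = 2 * ((1 - t) / Real.sqrt (1 - t)) by ring,
      Real.div_sqrt]
    ring
  linarith [hstep, heq.le, heq.ge]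

/-- for `n ≥ 2` and `p ∈ (0,1)`, the reduced buyer-optimal problem
has a maximizer, and every maximizer `(θ₀,k,θ)` satisfies `k·θ₀ = 0`. -/
theorem stmt10 (n : ℕ) (hn : 2 ≤ n) (p : ℝ) (hp : p ∈ Set.Ioo (0:ℝ) 1) :
    (∃ θ₀ k θ : ℝ, Feasible n p θ₀ k θ ∧
      ∀ θ₀' k' θ' : ℝ, Feasible n p θ₀' k' θ' →
        B n θ₀' k' θ' ≤ B n θ₀ k θ) ∧
    (∀ θ₀ k θ : ℝ, Feasible n p θ₀ k θ →
      (∀ θ₀' k' θ' : ℝ, Feasible n p θ₀' k' θ' →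
        B n θ₀' k' θ' ≤ B n θ₀ k θ) →
      k * θ₀ = 0) := by

  obtain ⟨ts, hts0, hts1, htsF, htsB⟩ := exists_good n hn hp
  have hn0 : (0:ℝ) < n := by positivity
  set B₀ : ℝ := B n 0 0 ts with hB₀def
  set δ : ℝ := (B₀ / (2 * n)) ^ 2 with hδdef
  have hδ0 : 0 < δ := by positivity
  -- small 1−t means small surplus
  have hsmall : ∀ a k t : ℝ, Feasible n p a k t → 1 - t < δ → B n a k t < B₀ := by
    intro a k t hf hlt
    have h1 : B n a k t ≤ 2 * n * Real.sqrt (1 - t) := B_bound n hf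
    have h2 : Real.sqrt (1 - t) < Real.sqrt δ := by
      apply Real.sqrt_lt_sqrt (by linarith [hf.2.2.1]) hlt
    have h3 : Real.sqrt δ = B₀ / (2 * n) := Real.sqrt_sq (by positivity)
    have h4 : 2 * (n:ℝ) * Real.sqrt (1 - t) < 2 * n * (B₀ / (2 * n)) := by
      apply mul_lt_mul_of_pos_left _ (by positivity)
      rw [← h3]; exact h2
    have h5 : 2 * (n:ℝ) * (B₀ / (2 * n)) = B₀ := by field_simp
    linarith
  have htsδ : ts ≤ 1 - δ := by
    by_contra h
    push_neg at h
    exact absurd (hsmall 0 0 ts htsF (by linarith)) (lt_irrefl B₀)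
  -- the compact feasible region
  set g : ℝ × ℝ × ℝ → ℝ := fun q =>
    (1 - q.2.1) * (1 - q.2.2) * (1 - Real.log (1 - q.2.2) + Real.log (1 - q.1)) +
      q.2.1 * (1 - q.1) with hgdef
  set K : Set (ℝ × ℝ × ℝ) := {q | 0 ≤ q.1 ∧ q.1 ≤ q.2.2 ∧ q.2.2 ≤ 1 - δ ∧
    0 ≤ q.2.1 ∧ q.2.1 ≤ 1 ∧ g q = p} with hKdef
  set C : Set (ℝ × ℝ × ℝ) := {q | 0 ≤ q.1 ∧ q.1 ≤ q.2.2 ∧ q.2.2 ≤ 1 - δ ∧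
    0 ≤ q.2.1 ∧ q.2.1 ≤ 1} with hCdef
  have hCclosed : IsClosed C := by
    have h1 : IsClosed {q : ℝ × ℝ × ℝ | 0 ≤ q.1} :=
      isClosed_le continuous_const continuous_fst
    have h2 : IsClosed {q : ℝ × ℝ × ℝ | q.1 ≤ q.2.2} :=
      isClosed_le continuous_fst (continuous_snd.comp continuous_snd)
    have h3 : IsClosed {q : ℝ × ℝ × ℝ | q.2.2 ≤ 1 - δ} :=
      isClosed_le (continuous_snd.comp continuous_snd) continuous_const
    have h4 : IsClosed {q : ℝ × ℝ × ℝ | 0 ≤ q.2.1} :=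
      isClosed_le continuous_const (continuous_fst.comp continuous_snd)
    have h5 : IsClosed {q : ℝ × ℝ × ℝ | q.2.1 ≤ 1} :=
      isClosed_le (continuous_fst.comp continuous_snd) continuous_const
    have : C = {q : ℝ × ℝ × ℝ | 0 ≤ q.1} ∩ ({q | q.1 ≤ q.2.2} ∩ ({q | q.2.2 ≤ 1 - δ} ∩
        ({q | 0 ≤ q.2.1} ∩ {q | q.2.1 ≤ 1}))) := by
      ext q
      simp only [hCdef, Set.mem_setOf_eq, Set.mem_inter_iff]
    rw [this]
    exact h1.inter (h2.inter (h3.inter (h4.inter h5)))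
  have hmemC : ∀ q ∈ C, (0:ℝ) < 1 - q.2.2 ∧ (0:ℝ) < 1 - q.1 := by
    intro q hq
    obtain ⟨h1, h2, h3, _, _⟩ := hq
    constructor <;> [linarith; linarith]
  have hgcont : ContinuousOn g C := by
    intro q hq
    obtain ⟨ht, ha⟩ := hmemC q hq
    apply ContinuousAt.continuousWithinAt
    have c1 : ContinuousAt (fun q : ℝ × ℝ × ℝ => q.1) q := continuous_fst.continuousAt
    have c2 : ContinuousAt (fun q : ℝ × ℝ × ℝ => q.2.1) q :=
      (continuous_fst.comp continuous_snd).continuousAt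
    have c3 : ContinuousAt (fun q : ℝ × ℝ × ℝ => q.2.2) q :=
      (continuous_snd.comp continuous_snd).continuousAt
    have clog1 : ContinuousAt (fun q : ℝ × ℝ × ℝ => Real.log (1 - q.2.2)) q :=
      ContinuousAt.log (continuousAt_const.sub c3) (by intro h; rw [h] at ht; linarith)
    have clog2 : ContinuousAt (fun q : ℝ × ℝ × ℝ => Real.log (1 - q.1)) q :=
      ContinuousAt.log (continuousAt_const.sub c1) (by intro h; rw [h] at ha; linarith)
    exact (((continuousAt_const.sub c2).mul (continuousAt_const.sub c3)).mul
      ((continuousAt_const.sub clog1).add clog2)).add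
      (c2.mul (continuousAt_const.sub c1))
  have hKclosed : IsClosed K := by
    have : K = C ∩ g ⁻¹' {p} := by
      ext q; simp only [hKdef, hCdef, Set.mem_setOf_eq, Set.mem_inter_iff,
        Set.mem_preimage, Set.mem_singleton_iff]; tauto
    rw [this]
    exact hgcont.preimage_isClosed_of_isClosed hCclosed isClosed_singleton
  have hKsub : K ⊆ Set.Icc ((0:ℝ), (0:ℝ), (0:ℝ)) (1, 1, 1) := by
    intro q hq
    obtain ⟨h1, h2, h3, h4, h5, _⟩ := hq
    simp only [Set.mem_Icc, Prod.le_def]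
    exact ⟨⟨h1, h4, by linarith⟩, ⟨by linarith, h5, by linarith⟩⟩
  have hKcomp : IsCompact K := IsCompact.of_isClosed_subset isCompact_Icc hKclosed hKsub
  have hmemts : ((0:ℝ), (0:ℝ), ts) ∈ K := by
    refine ⟨le_refl 0, hts0.le, htsδ, le_refl 0, zero_le_one, ?_⟩
    have h := htsF.2.2.2.2.2
    simp only [hgdef]
    convert h using 2 <;> norm_num
  have hKne : K.Nonempty := ⟨_, hmemts⟩
  have hBcont : ContinuousOn (fun q : ℝ × ℝ × ℝ => B n q.1 q.2.1 q.2.2) K := by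
    intro q hq
    have hqC : q ∈ C := ⟨hq.1, hq.2.1, hq.2.2.1, hq.2.2.2.1, hq.2.2.2.2.1⟩
    obtain ⟨ht, ha⟩ := hmemC q hqC
    apply ContinuousAt.continuousWithinAt
    have c1 : ContinuousAt (fun q : ℝ × ℝ × ℝ => q.1) q := continuous_fst.continuousAt
    have c2 : ContinuousAt (fun q : ℝ × ℝ × ℝ => q.2.1) q :=
      (continuous_fst.comp continuous_snd).continuousAt
    have c3 : ContinuousAt (fun q : ℝ × ℝ × ℝ => q.2.2) q :=
      (continuous_snd.comp continuous_snd).continuousAt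
    have cA1 : ContinuousAt (fun q : ℝ × ℝ × ℝ => A n q.2.2) q :=
      ContinuousAt.comp (hasDerivAt_A n (by intro h; rw [h] at ht; linarith)).continuousAt c3
    have cA2 : ContinuousAt (fun q : ℝ × ℝ × ℝ => A n q.1) q :=
      ContinuousAt.comp (hasDerivAt_A n (by intro h; rw [h] at ha; linarith)).continuousAt c1
    simp only [B]
    exact ((continuousAt_const.mul (continuousAt_const.sub c2)).mul
      (continuousAt_const.sub c3)).mul (cA1.sub cA2)
  obtain ⟨q, hqK, hqmax⟩ := hKcomp.exists_isMaxOn hKne hBcont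
  -- the maximizer is feasible and globally optimal
  have hqF : Feasible n p q.1 q.2.1 q.2.2 := by
    obtain ⟨h1, h2, h3, h4, h5, h6⟩ := hqK
    exact ⟨h1, h2, by linarith, h4, h5, h6⟩
  have hglobal : ∀ a k t : ℝ, Feasible n p a k t → B n a k t ≤ B n q.1 q.2.1 q.2.2 := by
    intro a k t hf
    by_cases hcase : t ≤ 1 - δ
    · have hmem : (a, k, t) ∈ K :=
        ⟨hf.1, hf.2.1, hcase, hf.2.2.2.1, hf.2.2.2.2.1, hf.2.2.2.2.2⟩
      exact hqmax hmem
    · push_neg at hcase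
      have h1 : B n a k t < B₀ := hsmall a k t hf (by linarith)
      have h2 : B₀ ≤ B n q.1 q.2.1 q.2.2 := hqmax hmemts
      linarith
  constructor
  · exact ⟨q.1, q.2.1, q.2.2, hqF, hglobal⟩
  · intro a k t hf hmax
    have hBpos : 0 < B n a k t := lt_of_lt_of_le htsB (hmax 0 0 ts htsF)
    by_contra hka
    have hk : 0 < k := lt_of_le_of_ne hf.2.2.2.1 (by
      intro h; exact hka (by rw [← h]; ring))
    have ha : 0 < a := lt_of_le_of_ne hf.1 (by
      intro h; exact hka (by rw [← h]; ring))
    obtain ⟨a', k', hf', hlt⟩ := improve n hn hf hBpos hk ha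
    exact absurd (hmax a' k' t hf') (not_le.mpr hlt)
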